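/- Phase transition of the invariant measure in the symmetric weak-effects case: let θ₁ = θ₂ = θ̄ ≥ 0 and N₁ = N₂ = N̄ > 1, and let w(x) = exp(−θ̄x(1−x))·(x(1−x))^{N̄−1} on (0,1). If θ̄ > 4(N̄−1), then x = 1/2 is a strict local minimum of w (the invariant density is bimodal near the center), while if θ̄ < 4(N̄−1), then x = 1/2 is a strict local maximum of w (the invariant density is unimodal near the center). -/

import Mathlib

open Filter

/-- Unnormalized invariant density of the weak-effects limit in the symmetric
case `θ₁ = θ₂ = θ̄`, `N₁ = N₂ = N̄`: `w(x) = exp(−θ̄x(1−x))·(x(1−x))^{N̄−1}`. -/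
noncomputable def wsym (θ N x : ℝ) : ℝ :=
  Real.exp (-θ * (x * (1 - x))) * (x * (1 - x)) ^ (N - 1)

noncomputable def hfun (θ N y : ℝ) : ℝ := -θ * y + (N - 1) * Real.log y

lemma wsym_eq (θ N x : ℝ) (hx : 0 < x * (1 - x)) :
    wsym θ N x = Real.exp (hfun θ N (x * (1 - x))) := by
  unfold wsym hfun
  rw [Real.rpow_def_of_pos hx, ← Real.exp_add]
  ring_nf

lemma hasDerivAt_hfun (θ N y : ℝ) (hy : 0 < y) :
    HasDerivAt (hfun θ N) (-θ + (N - 1) * y⁻¹) y := by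
  have h1 : HasDerivAt (fun y : ℝ => -θ * y) (-θ) y := by
    simpa using (hasDerivAt_id y).const_mul (-θ)
  have h2 := (Real.hasDerivAt_log hy.ne').const_mul (N - 1)
  exact h1.add h2

lemma contOn_hfun (θ N c : ℝ) (hc : 0 < c) :
    ContinuousOn (hfun θ N) (Set.Icc c (1/4)) := fun y hy =>
  ((hasDerivAt_hfun θ N y (lt_of_lt_of_le hc hy.1)).continuousAt).continuousWithinAt

lemma eventually_y_mem (c : ℝ) (hc : c < 1/4) :
    ∀ᶠ x in nhdsWithin (1 / 2 : ℝ) {(1 / 2 : ℝ)}ᶜ,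
      c < x * (1 - x) ∧ x * (1 - x) < 1/4 := by
  set ε : ℝ := Real.sqrt (1/4 - c) with hε
  have hεpos : 0 < ε := Real.sqrt_pos.mpr (by linarith)
  have hmem : ∀ᶠ x in nhdsWithin (1 / 2 : ℝ) {(1 / 2 : ℝ)}ᶜ,
      x ∈ Metric.ball (1/2 : ℝ) ε ∩ {(1/2 : ℝ)}ᶜ :=
    Filter.inter_mem (nhdsWithin_le_nhds (Metric.ball_mem_nhds _ hεpos))
      self_mem_nhdsWithin
  filter_upwards [hmem] with x hx
  obtain ⟨hball, hne⟩ := hx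
  have hdist : |x - 1/2| < ε := by
    simpa [Real.dist_eq] using hball
  have hxy : x * (1 - x) = 1/4 - (x - 1/2)^2 := by ring
  have hsq : (x - 1/2)^2 < ε^2 := by
    have h1 := abs_lt.mp hdist
    nlinarith [h1.1, h1.2]
  have hε2 : ε^2 = 1/4 - c := Real.sq_sqrt (by linarith)
  have hne' : x - 1/2 ≠ 0 := sub_ne_zero.mpr (by simpa using hne)
  constructor
  · rw [hxy]; rw [hε2] at hsq; linarith
  · rw [hxy]
    have : 0 < (x - 1/2)^2 := by positivity
    linarith

theorem invariant_density_phase_transition (θ N : ℝ) (hθ : 0 ≤ θ) (hN : 1 < N) :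
    (θ > 4 * (N - 1) →
      ∀ᶠ x in nhdsWithin (1 / 2 : ℝ) {(1 / 2 : ℝ)}ᶜ, wsym θ N (1 / 2) < wsym θ N x) ∧
    (θ < 4 * (N - 1) →
      ∀ᶠ x in nhdsWithin (1 / 2 : ℝ) {(1 / 2 : ℝ)}ᶜ, wsym θ N x < wsym θ N (1 / 2)) := by
  have hw12 : wsym θ N (1/2) = Real.exp (hfun θ N (1/4)) := by
    have := wsym_eq θ N (1/2) (by norm_num)
    norm_num at this ⊢
    convert this using 3 <;> norm_num
  constructor
  · intro hgt
    have hθpos : 0 < θ := lt_of_le_of_lt (by nlinarith) hgt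
    set c : ℝ := ((N - 1) / θ + 1/4) / 2 with hcdef
    have hdiv : 0 < (N - 1) / θ := div_pos (by linarith) hθpos
    have hc0 : 0 < c := by rw [hcdef]; linarith
    have hcθ : (N - 1) / θ < 1/4 := by
      rw [div_lt_iff₀ hθpos]; nlinarith
    have hc1 : (N - 1) / θ < c := by rw [hcdef]; linarith
    have hc4 : c < 1/4 := by rw [hcdef]; linarith
    have hanti : StrictAntiOn (hfun θ N) (Set.Icc c (1/4)) := by
      apply strictAntiOn_of_deriv_neg (convex_Icc c (1/4)) (contOn_hfun θ N c hc0)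
      intro y hy
      rw [interior_Icc] at hy
      have hy0 : 0 < y := lt_trans hc0 hy.1
      rw [(hasDerivAt_hfun θ N y hy0).deriv]
      have : (N - 1) / θ < y := lt_trans hc1 hy.1
      have hNθ : N - 1 < θ * y := by
        rw [div_lt_iff₀ hθpos] at this; linarith [this]
      have : (N - 1) * y⁻¹ < θ := by
        rw [mul_inv_lt_iff₀ hy0]; linarith
      linarith
    filter_upwards [eventually_y_mem c hc4] with x hx
    obtain ⟨hyc, hy4⟩ := hx
    have hypos : 0 < x * (1 - x) := lt_trans hc0 hyc
    rw [wsym_eq θ N x hypos, hw12]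
    exact Real.exp_lt_exp.mpr
      (hanti ⟨hyc.le, hy4.le⟩ ⟨hc4.le, le_refl _⟩ hy4)
  · intro hlt
    have hmono : StrictMonoOn (hfun θ N) (Set.Icc (1/8 : ℝ) (1/4)) := by
      apply strictMonoOn_of_deriv_pos (convex_Icc _ _) (contOn_hfun θ N (1/8) (by norm_num))
      intro y hy
      rw [interior_Icc] at hy
      have hy0 : (0 : ℝ) < y := by linarith [hy.1]
      rw [(hasDerivAt_hfun θ N y hy0).deriv]
      have hθy : θ * y < N - 1 := by nlinarith [hy.1, hy.2]
      have h2 : θ < (N - 1) / y := by rw [lt_div_iff₀ hy0]; linarith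
      rw [div_eq_mul_inv] at h2
      linarith
    filter_upwards [eventually_y_mem (1/8) (by norm_num)] with x hx
    obtain ⟨hyc, hy4⟩ := hx
    have hypos : 0 < x * (1 - x) := by linarith
    rw [wsym_eq θ N x hypos, hw12]
    exact Real.exp_lt_exp.mpr
      (hmono ⟨hyc.le, hy4.le⟩ ⟨by norm_num, le_refl _⟩ hy4)
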